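/- Let m ≥ n, let A and B be m×n complex matrices with rank(A) = rank(B) = n (full column rank), and let E = B − A. Then ‖B† − A†‖_F² ≤ min{‖B†‖₂²‖EA†‖_F², ‖A†‖₂²‖EB†‖_F²}. -/

import Mathlib

open Matrix

/-- The square of the Frobenius norm of a complex matrix. -/
noncomputable def frobSq {α β : Type*} [Fintype α] [Fintype β] (M : Matrix α β ℂ) : ℝ :=
  ∑ i, ∑ j, ‖M i j‖ ^ 2

/-- The spectral norm (ℓ²-operator norm) of a complex matrix. -/
noncomputable def spec {α β : Type*} [Fintype α] [Fintype β] [DecidableEq β]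
    (M : Matrix α β ℂ) : ℝ :=
  ‖LinearMap.toContinuousLinearMap (Matrix.toEuclideanLin M)‖

/-- `X` is the Moore–Penrose inverse of `M` (the four Penrose equations). -/
def IsMoorePenrose {α β : Type*} [Fintype α] [Fintype β]
    (M : Matrix α β ℂ) (X : Matrix β α ℂ) : Prop :=
  M * X * M = M ∧ X * M * X = X ∧ (M * X)ᴴ = M * X ∧ (X * M)ᴴ = X * M

lemma frobSq_eq_re_trace {α β : Type*} [Fintype α] [Fintype β] (M : Matrix α β ℂ) :
    frobSq M = (Matrix.trace (Mᴴ * M)).re := by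
  rw [frobSq, Matrix.trace]
  simp only [Matrix.diag_apply, Matrix.mul_apply, Matrix.conjTranspose_apply]
  rw [Complex.re_sum, Finset.sum_comm]
  refine Finset.sum_congr rfl fun i _ => ?_
  rw [Complex.re_sum]
  refine Finset.sum_congr rfl fun j _ => ?_
  simp [mul_comm, Complex.mul_conj, Complex.normSq_eq_norm_sq]
  norm_cast

lemma frobSq_neg {α β : Type*} [Fintype α] [Fintype β] (M : Matrix α β ℂ) :
    frobSq (-M) = frobSq M := by
  simp [frobSq]

lemma frobSq_conjTranspose {α β : Type*} [Fintype α] [Fintype β] (M : Matrix α β ℂ) :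
    frobSq Mᴴ = frobSq M := by
  rw [frobSq, frobSq, Finset.sum_comm]
  simp [Matrix.conjTranspose_apply]

lemma frobSq_add {α β : Type*} [Fintype α] [Fintype β] (X Y : Matrix α β ℂ)
    (h : Matrix.trace (Xᴴ * Y) = 0) : frobSq (X + Y) = frobSq X + frobSq Y := by
  have h' : Matrix.trace (Yᴴ * X) = 0 := by
    have := congrArg star h
    rwa [← Matrix.trace_conjTranspose, Matrix.conjTranspose_mul,
      Matrix.conjTranspose_conjTranspose, star_zero] at this
  rw [frobSq_eq_re_trace, frobSq_eq_re_trace, frobSq_eq_re_trace]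
  rw [Matrix.conjTranspose_add, Matrix.add_mul, Matrix.mul_add, Matrix.mul_add,
    Matrix.trace_add, Matrix.trace_add, Matrix.trace_add, h, h']
  simp

lemma euclid_norm_sq {l : Type*} [Fintype l] (v : EuclideanSpace ℂ l) :
    ‖v‖ ^ 2 = ∑ i, ‖v i‖ ^ 2 := by
  rw [EuclideanSpace.norm_eq, Real.sq_sqrt]
  positivity

lemma frobSq_mul_le {k l p : Type*} [Fintype k] [Fintype l] [Fintype p] [DecidableEq l]
    (M : Matrix k l ℂ) (N : Matrix l p ℂ) :
    frobSq (M * N) ≤ spec M ^ 2 * frobSq N := by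
  set f := LinearMap.toContinuousLinearMap (Matrix.toEuclideanLin M) with hf
  set c : p → EuclideanSpace ℂ l := fun j => (WithLp.equiv 2 (l → ℂ)).symm (fun i => N i j) with hc
  have h1 : frobSq (M * N) = ∑ j, ‖f (c j)‖ ^ 2 := by
    rw [frobSq, Finset.sum_comm]
    refine Finset.sum_congr rfl fun j _ => ?_
    have : f (c j) = (WithLp.equiv 2 (k → ℂ)).symm (M *ᵥ fun i => N i j) := by
      rw [hf]
      simp only [LinearMap.coe_toContinuousLinearMap']
      exact Matrix.toEuclideanLin_apply_piLp_toLp M _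
    rw [this, euclid_norm_sq]
    rfl
  have h2 : frobSq N = ∑ j, ‖c j‖ ^ 2 := by
    rw [frobSq, Finset.sum_comm]
    refine Finset.sum_congr rfl fun j _ => ?_
    rw [euclid_norm_sq]
    rfl
  rw [h1, h2, Finset.mul_sum]
  refine Finset.sum_le_sum fun j _ => ?_
  have hb : ‖f (c j)‖ ≤ spec M * ‖c j‖ := f.le_opNorm (c j)
  calc ‖f (c j)‖ ^ 2 ≤ (spec M * ‖c j‖) ^ 2 := by
        apply pow_le_pow_left₀ (norm_nonneg _) hb
    _ = spec M ^ 2 * ‖c j‖ ^ 2 := by ring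

lemma pinv_mul_eq_one {m n : ℕ} (A : Matrix (Fin m) (Fin n) ℂ)
    (Adag : Matrix (Fin n) (Fin m) ℂ)
    (hA : IsMoorePenrose A Adag) (hrank : A.rank = n) : Adag * A = 1 := by
  obtain ⟨h1, h2, _, _⟩ := hA
  set C : Matrix (Fin n) (Fin n) ℂ := Adag * A with hC
  have hCC : C * C = C := by
    rw [hC, Matrix.mul_assoc, ← Matrix.mul_assoc A Adag A, h1]
  have hAC : A * C = A := by rw [hC, ← Matrix.mul_assoc, h1]
  have hrC : C.rank = n := by
    refine le_antisymm ?_ ?_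
    · simpa using C.rank_le_card_width
    · calc n = A.rank := hrank.symm
        _ = (A * C).rank := by rw [hAC]
        _ ≤ C.rank := A.rank_mul_le_right C
  have hunit : IsUnit C := by
    rw [← Matrix.mulVec_injective_iff_isUnit]
    have hsurj : Function.Surjective C.mulVecLin := by
      rw [← LinearMap.range_eq_top]
      apply Submodule.eq_top_of_finrank_eq
      rw [← Matrix.rank, hrC]
      simp
    exact (LinearMap.injective_iff_surjective).mpr hsurj
  have hcc1 : C * C = C * 1 := by rw [hCC, Matrix.mul_one]
  exact hunit.mul_left_cancel hcc1


lemma frobSq_proj_split {α β : Type*} [Fintype α] [Fintype β] [DecidableEq α]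
    (Q : Matrix α α ℂ) (M : Matrix α β ℂ) (hQH : Qᴴ = Q) (hQQ : Q * Q = Q) :
    frobSq M = frobSq (Q * M) + frobSq ((1 - Q) * M) := by
  have hz : (Q * M)ᴴ * ((1 - Q) * M) = 0 := by
    rw [Matrix.conjTranspose_mul, hQH, Matrix.mul_assoc, ← Matrix.mul_assoc Q (1 - Q) M,
      Matrix.mul_sub, Matrix.mul_one, hQQ, sub_self, Matrix.zero_mul, Matrix.mul_zero]
  have hM : M = Q * M + (1 - Q) * M := by
    rw [Matrix.sub_mul, Matrix.one_mul]; abel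
  calc frobSq M = frobSq (Q * M + (1 - Q) * M) := by rw [← hM]
    _ = _ := frobSq_add _ _ (by rw [hz, Matrix.trace_zero])

lemma key_bound {m n : ℕ} (A B : Matrix (Fin m) (Fin n) ℂ)
    (Adag Bdag : Matrix (Fin n) (Fin m) ℂ)
    (hA : IsMoorePenrose A Adag) (hB : IsMoorePenrose B Bdag)
    (hiA : Adag * A = 1) (hiB : Bdag * B = 1) :
    frobSq (Bdag - Adag) ≤ spec Bdag ^ 2 * frobSq ((B - A) * Adag) := by
  obtain ⟨hA1, hA2, hA3, _⟩ := hA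
  obtain ⟨hB1, hB2, hB3, _⟩ := hB
  set P : Matrix (Fin m) (Fin m) ℂ := A * Adag with hPdef
  set Q : Matrix (Fin m) (Fin m) ℂ := B * Bdag with hQdef
  set EA : Matrix (Fin m) (Fin m) ℂ := (B - A) * Adag with hEAdef
  have hPP : P * P = P := by
    rw [hPdef, Matrix.mul_assoc A Adag (A * Adag), ← Matrix.mul_assoc Adag A Adag, hA2]
  have hQQ : Q * Q = Q := by
    rw [hQdef, Matrix.mul_assoc B Bdag (B * Bdag), ← Matrix.mul_assoc Bdag B Bdag, hB2]
  have hPH : Pᴴ = P := hA3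
  have hQH : Qᴴ = Q := hB3
  have hBdQ : Bdag * Q = Bdag := by
    rw [hQdef, ← Matrix.mul_assoc, hB2]
  have hAdagP : Adag * P = Adag := by
    rw [hPdef, ← Matrix.mul_assoc, hA2]
  -- decomposition of the difference
  set X : Matrix (Fin n) (Fin m) ℂ := -(Bdag * EA) with hXdef
  set Y : Matrix (Fin n) (Fin m) ℂ := Bdag * (1 - P) with hYdef
  have hdecomp : Bdag - Adag = X + Y := by
    have h : Bdag * EA = Adag - Bdag * P := by
      rw [hEAdef, Matrix.sub_mul, Matrix.mul_sub, ← Matrix.mul_assoc, hiB, Matrix.one_mul,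
        hPdef, ← Matrix.mul_assoc]
    rw [hXdef, hYdef, h, Matrix.mul_sub, Matrix.mul_one]
    abel
  -- orthogonality of X and Y
  have hXP : X * P = X := by
    rw [hXdef, hEAdef, Matrix.neg_mul, neg_inj, Matrix.mul_assoc Bdag ((B - A) * Adag) P,
      Matrix.mul_assoc (B - A) Adag P, hAdagP]
  have hX1P : X * (1 - P) = 0 := by
    rw [Matrix.mul_sub, Matrix.mul_one, hXP, sub_self]
  have hortho : Matrix.trace (Xᴴ * Y) = 0 := by
    rw [Matrix.trace_mul_comm]
    have h1PH : (1 - P)ᴴ = (1 - P) := by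
      rw [Matrix.conjTranspose_sub, hPH, Matrix.conjTranspose_one]
    have h1P : (1 - P) * Xᴴ = 0 := by
      calc (1 - P) * Xᴴ = (1 - P)ᴴ * Xᴴ := by rw [h1PH]
        _ = (X * (1 - P))ᴴ := by rw [Matrix.conjTranspose_mul]
        _ = 0 := by rw [hX1P, Matrix.conjTranspose_zero]
    rw [hYdef, Matrix.mul_assoc, h1P, Matrix.mul_zero, Matrix.trace_zero]
  have hpyth : frobSq (Bdag - Adag) = frobSq X + frobSq Y := by
    rw [hdecomp]; exact frobSq_add X Y hortho
  -- bound frobSq X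
  have hXbound : frobSq X ≤ spec Bdag ^ 2 * frobSq (Q * EA) := by
    have hXQ : X = -(Bdag * (Q * EA)) := by
      rw [hXdef, ← Matrix.mul_assoc Bdag Q EA, hBdQ]
    rw [hXQ, frobSq_neg]
    exact frobSq_mul_le Bdag (Q * EA)
  -- bound frobSq Y
  have hYbound : frobSq Y ≤ spec Bdag ^ 2 * frobSq (Q * (1 - P)) := by
    have hYQ : Y = Bdag * (Q * (1 - P)) := by
      rw [hYdef, ← Matrix.mul_assoc Bdag Q (1 - P), hBdQ]
    rw [hYQ]
    exact frobSq_mul_le Bdag (Q * (1 - P))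
  -- trace facts
  have htrP : frobSq P = (n : ℝ) := by
    rw [frobSq_eq_re_trace, hPH, hPP, hPdef, Matrix.trace_mul_comm, hiA, Matrix.trace_one]
    simp
  have htrQ : frobSq Q = (n : ℝ) := by
    rw [frobSq_eq_re_trace, hQH, hQQ, hQdef, Matrix.trace_mul_comm, hiB, Matrix.trace_one]
    simp
  -- projector splits
  have hQsplit : frobSq Q = frobSq (P * Q) + frobSq ((1 - P) * Q) :=
    frobSq_proj_split P Q hPH hPP
  have hPsplit : frobSq P = frobSq (Q * P) + frobSq ((1 - Q) * P) :=
    frobSq_proj_split Q P hQH hQQ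
  have hswap : frobSq (Q * P) = frobSq (P * Q) := by
    rw [← frobSq_conjTranspose (P * Q), Matrix.conjTranspose_mul, hPH, hQH]
  -- (1-Q)*EA = -((1-Q)*P)
  have h1QB : (1 - Q) * B = 0 := by
    rw [Matrix.sub_mul, Matrix.one_mul, hB1, sub_self]
  have h1QEA : (1 - Q) * EA = -((1 - Q) * P) := by
    rw [hEAdef, ← Matrix.mul_assoc, Matrix.mul_sub (1 - Q) B A, h1QB, zero_sub,
      Matrix.neg_mul, hPdef, ← Matrix.mul_assoc]
  have hEAneg : frobSq ((1 - Q) * EA) = frobSq ((1 - Q) * P) := by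
    rw [h1QEA, frobSq_neg]
  -- frobSq (Q * (1-P)) = frobSq ((1-Q) * EA)
  have hct : frobSq (Q * (1 - P)) = frobSq ((1 - P) * Q) := by
    rw [← frobSq_conjTranspose (Q * (1 - P)), Matrix.conjTranspose_mul, hQH,
      Matrix.conjTranspose_sub, hPH, Matrix.conjTranspose_one]
  have hkeyeq : frobSq (Q * (1 - P)) = frobSq ((1 - Q) * EA) := by
    rw [hct, hEAneg]; linarith
  -- EA split
  have hEAsplit : frobSq EA = frobSq (Q * EA) + frobSq ((1 - Q) * EA) :=
    frobSq_proj_split Q EA hQH hQQ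
  rw [hpyth, hEAsplit, mul_add]
  rw [hkeyeq] at hYbound
  linarith [hXbound, hYbound]

theorem stmt12 {m n : ℕ}
    (A B : Matrix (Fin m) (Fin n) ℂ)
    (Adag Bdag : Matrix (Fin n) (Fin m) ℂ)
    (hA : IsMoorePenrose A Adag) (hB : IsMoorePenrose B Bdag)
    (E : Matrix (Fin m) (Fin n) ℂ) (hE : E = B - A)
    (hmn : n ≤ m) (hrankA : A.rank = n) (hrankB : B.rank = n)
    :
    frobSq (Bdag - Adag) ≤
      min (spec Bdag ^ 2 * frobSq (E * Adag)) (spec Adag ^ 2 * frobSq (E * Bdag)) := by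
  have hiA := pinv_mul_eq_one A Adag hA hrankA
  have hiB := pinv_mul_eq_one B Bdag hB hrankB
  refine le_min ?_ ?_
  · rw [hE]
    exact key_bound A B Adag Bdag hA hB hiA hiB
  · have h := key_bound B A Bdag Adag hB hA hiB hiA
    have h1 : frobSq (Adag - Bdag) = frobSq (Bdag - Adag) := by
      rw [← frobSq_neg (Adag - Bdag), neg_sub]
    have h2 : frobSq ((A - B) * Bdag) = frobSq (E * Bdag) := by
      rw [hE, ← neg_sub B A, Matrix.neg_mul, frobSq_neg]
    rw [h1, h2] at h
    exact h
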